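/- The double series ∑_{n=1}^∞ ∑_{k=1}^∞ (1/k!) · Γ(2k)Γ(n+k)/Γ(1+n+2k) · H_{n+k-1} equals (3/2)ζ(3). -/

import Mathlib

open scoped BigOperators
open Filter Topology

noncomputable def H (n : ℕ) : ℝ := ∑ j ∈ Finset.range n, (1:ℝ)/(j+1)

lemma H_zero : H 0 = 0 := by simp [H]

lemma H_succ (n : ℕ) : H (n+1) = H n + 1/((n:ℝ)+1) := by
  simp [H, Finset.sum_range_succ]

lemma H_nonneg (n : ℕ) : 0 ≤ H n := by
  apply Finset.sum_nonneg; intro i _; positivity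

lemma H_mono {a b : ℕ} (h : a ≤ b) : H a ≤ H b := by
  induction b with
  | zero => simp_all
  | succ b ih =>
    rcases Nat.lt_or_ge a (b+1) with h'|h'
    · have := ih (Nat.lt_succ_iff.mp h')
      rw [H_succ]; have : (0:ℝ) ≤ 1/((b:ℝ)+1) := by positivity
      linarith [ih (Nat.lt_succ_iff.mp h')]
    · have : a = b+1 := le_antisymm h h'
      simp [this]

lemma H_le_two_sqrt (n : ℕ) : H n ≤ 2 * Real.sqrt n := by
  induction n with
  | zero => simp [H_zero]
  | succ n ih =>
    rw [H_succ]
    push_cast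
    set a := Real.sqrt n with hadef
    set b := Real.sqrt ((n:ℝ)+1) with hbdef
    have ha : a ^ 2 = (n:ℝ) := Real.sq_sqrt (by positivity)
    have hb : b ^ 2 = (n:ℝ)+1 := Real.sq_sqrt (by positivity)
    have ha0 : 0 ≤ a := Real.sqrt_nonneg _
    have hb1 : (1:ℝ) ≤ b := by nlinarith [Real.sqrt_nonneg ((n:ℝ)+1)]
    have hab : a ≤ b := Real.sqrt_le_sqrt (by linarith)
    have h3 : (b-a)*(b+a) = 1 := by nlinarith
    have key : 1/((n:ℝ)+1) ≤ 2*(b-a) := by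
      rw [← hb, div_le_iff₀ (by positivity)]
      nlinarith [mul_nonneg (sub_nonneg.mpr hab) (by nlinarith : (0:ℝ) ≤ 2*b^2 - (b+a))]
    linarith

lemma hasSum_telescope {F : ℕ → ℝ} (hF0 : ∀ n, 0 ≤ F n - F (n+1))
    (hlim : Tendsto F atTop (𝓝 0)) :
    HasSum (fun n => F n - F (n+1)) (F 0) := by
  rw [hasSum_iff_tendsto_nat_of_nonneg hF0]
  have : ∀ n, ∑ i ∈ Finset.range n, (F i - F (i+1)) = F 0 - F n := by
    intro n; exact Finset.sum_range_sub' F n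
  simp only [this]
  simpa using tendsto_const_nhds.sub hlim

lemma summable_one_div_sq : Summable (fun n : ℕ => 1/((n:ℝ)+1)^2) := by
  have := (summable_nat_add_iff 1).mpr (Real.summable_one_div_nat_pow.mpr (by norm_num : 1 < 2))
  refine this.congr fun n => ?_
  push_cast; ring

lemma summable_one_div_cube : Summable (fun n : ℕ => 1/((n:ℝ)+1)^3) := by
  have := (summable_nat_add_iff 1).mpr (Real.summable_one_div_nat_pow.mpr (by norm_num : 1 < 3))
  refine this.congr fun n => ?_
  push_cast; ring

lemma summable_sqrt_div : Summable (fun n : ℕ => Real.sqrt ((n:ℝ)+1)/((n:ℝ)+1)^2) := by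
  have base : Summable (fun n : ℕ => ((n:ℝ)) ^ (-3/2 : ℝ)) :=
    Real.summable_nat_rpow.mpr (by norm_num)
  have := (summable_nat_add_iff 1).mpr base
  refine this.congr fun n => ?_
  have h1 : ((n+1:ℕ):ℝ) = (n:ℝ)+1 := by push_cast; ring
  rw [h1, Real.sqrt_eq_rpow,
    show (((n:ℝ)+1)^2 : ℝ) = ((n:ℝ)+1)^((2:ℕ):ℝ) from (Real.rpow_natCast _ 2).symm,
    ← Real.rpow_sub (by positivity)]
  norm_num

noncomputable def Fk (k m : ℕ) : ℝ :=
  (Nat.factorial m : ℝ) / (Nat.factorial (m + k + 1) : ℝ) *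
    (H m / (k+1) + 1/((k:ℝ)+1)^2)

lemma Fk_nonneg (k m : ℕ) : 0 ≤ Fk k m := by
  unfold Fk
  have := H_nonneg m
  positivity

lemma Fk_step (k m : ℕ) :
    Fk k m - Fk k (m+1) = (Nat.factorial m : ℝ)/(Nat.factorial (m+k+2) : ℝ) * H m := by
  unfold Fk
  have e1 : m + 1 + k + 1 = m + k + 2 := by omega
  rw [e1, show m+k+2 = (m+k+1)+1 from rfl, Nat.factorial_succ (m+k+1),
    Nat.factorial_succ m, H_succ]
  have h1 : (Nat.factorial (m+k+1) : ℝ) ≠ 0 := by positivity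
  have h2 : ((k:ℝ)+1) ≠ 0 := by positivity
  have h3 : ((m:ℝ)+1) ≠ 0 := by positivity
  have h4 : ((m+k+1:ℕ):ℝ)+1 ≠ 0 := by positivity
  push_cast
  field_simp
  ring

lemma Fk_le (k m : ℕ) : Fk k m ≤ 2*Real.sqrt ((m:ℝ)+1)/((m:ℝ)+1) + 1/((m:ℝ)+1) := by
  unfold Fk
  have hfle : (Nat.factorial m : ℝ)/(Nat.factorial (m + k + 1) : ℝ) ≤ 1/((m:ℝ)+1) := by
    rw [div_le_div_iff₀ (by positivity) (by positivity)]
    have : (m+1).factorial ≤ (m+k+1).factorial := Nat.factorial_le (by omega)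
    calc (Nat.factorial m : ℝ) * ((m:ℝ)+1) = ((m+1).factorial : ℝ) := by
          rw [Nat.factorial_succ]; push_cast; ring
      _ ≤ ((m+k+1).factorial : ℝ) := by exact_mod_cast this
      _ = 1 * _ := (one_mul _).symm
  have hH : H m / ((k:ℝ)+1) + 1/((k:ℝ)+1)^2 ≤ 2*Real.sqrt ((m:ℝ)+1) + 1 := by
    have h1 : H m ≤ 2*Real.sqrt ((m:ℝ)+1) := by
      refine (H_le_two_sqrt m).trans ?_
      have := Real.sqrt_le_sqrt (show (m:ℝ) ≤ (m:ℝ)+1 by linarith)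
      linarith
    have hk1 : (1:ℝ) ≤ (k:ℝ)+1 := by
      linarith [show (0:ℝ) ≤ (k:ℝ) from Nat.cast_nonneg k]
    have s0 : 0 ≤ Real.sqrt ((m:ℝ)+1) := Real.sqrt_nonneg _
    have e1 : H m / ((k:ℝ)+1) ≤ H m := by
      rw [div_le_iff₀ (by positivity)]
      nlinarith [H_nonneg m]
    have e2 : 1/((k:ℝ)+1)^2 ≤ 1 := by
      rw [div_le_one (by positivity)]; nlinarith
    linarith
  have h0 : (0:ℝ) ≤ (Nat.factorial m : ℝ)/(Nat.factorial (m + k + 1) : ℝ) := by positivity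
  have h0' : (0:ℝ) ≤ H m / ((k:ℝ)+1) + 1/((k:ℝ)+1)^2 := by
    have hm := H_nonneg m; positivity
  calc (Nat.factorial m : ℝ)/(Nat.factorial (m + k + 1) : ℝ) *
      (H m / ((k:ℝ)+1) + 1/((k:ℝ)+1)^2)
      ≤ (1/((m:ℝ)+1)) * (2*Real.sqrt ((m:ℝ)+1) + 1) := by
        apply mul_le_mul hfle hH h0' (by positivity)
    _ = 2*Real.sqrt ((m:ℝ)+1)/((m:ℝ)+1) + 1/((m:ℝ)+1) := by ring

lemma sqrt_tendsto_atTop : Tendsto (fun m : ℕ => Real.sqrt ((m:ℝ)+1)) atTop atTop := by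
  apply tendsto_atTop_atTop.mpr
  intro b
  refine ⟨⌈b^2⌉₊, fun m hm => ?_⟩
  rcases le_or_gt b 0 with hb|hb
  · exact hb.trans (Real.sqrt_nonneg _)
  · have hble : b^2 ≤ (m:ℝ)+1 := by
      calc b^2 ≤ (⌈b^2⌉₊:ℝ) := Nat.le_ceil _
        _ ≤ (m:ℝ) := Nat.cast_le.mpr hm
        _ ≤ (m:ℝ)+1 := by linarith
    calc b = Real.sqrt (b^2) := (Real.sqrt_sq hb.le).symm
      _ ≤ _ := Real.sqrt_le_sqrt hble

lemma Fk_tendsto (k : ℕ) : Tendsto (fun m => Fk k m) atTop (𝓝 0) := by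
  apply squeeze_zero (fun m => Fk_nonneg k m) (fun m => Fk_le k m)
  have h1 : Tendsto (fun m : ℕ => 2*Real.sqrt ((m:ℝ)+1)/((m:ℝ)+1)) atTop (𝓝 0) := by
    have : ∀ m : ℕ, 2*Real.sqrt ((m:ℝ)+1)/((m:ℝ)+1) = 2 * (Real.sqrt ((m:ℝ)+1))⁻¹ := by
      intro m
      have h : Real.sqrt ((m:ℝ)+1) ≠ 0 := by
        have h1 : (0:ℝ) < Real.sqrt ((m:ℝ)+1) := Real.sqrt_pos.mpr (by positivity)
        linarith
      rw [div_eq_iff (show ((m:ℝ)+1) ≠ 0 by positivity)]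
      nth_rewrite 2 [show ((m:ℝ)+1) = Real.sqrt ((m:ℝ)+1) * Real.sqrt ((m:ℝ)+1) from
        (Real.mul_self_sqrt (by positivity)).symm]
      field_simp
      rw [Real.sqrt_sq (Real.sqrt_nonneg _), Real.mul_self_sqrt (by positivity)]
    simp only [this]
    simpa using (sqrt_tendsto_atTop.inv_tendsto_atTop).const_mul (2:ℝ)
  have h2 : Tendsto (fun m : ℕ => 1/((m:ℝ)+1)) atTop (𝓝 0) :=
    tendsto_one_div_add_atTop_nhds_zero_nat
  simpa using h1.add h2

lemma inner_hasSum (k : ℕ) :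
    HasSum (fun n : ℕ =>
      (1 / (Nat.factorial (k+1) : ℝ)) *
      ((Nat.factorial (2*k+1) : ℝ) * (Nat.factorial (n+k+1) : ℝ) / (Nat.factorial (n+2*k+3) : ℝ))
      * H (n+k+1))
      (H k / (2*((k:ℝ)+1)^2) + 1/((k:ℝ)+1)^3) := by
  have hfun : (fun n : ℕ => Fk k (n+k+1) - Fk k (n+1+k+1)) =
      (fun n : ℕ => (Nat.factorial (n+k+1) : ℝ)/(Nat.factorial (n+2*k+3) : ℝ) * H (n+k+1)) := by
    funext n
    rw [show n+1+k+1 = n+k+1+1 from by omega, Fk_step k (n+k+1),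
      show n+k+1+k+2 = n+2*k+3 from by omega]
  have hts := hasSum_telescope (F := fun n => Fk k (n+k+1))
    (fun n => by
      have h : Fk k (n+k+1) - Fk k (n+1+k+1) =
          (Nat.factorial (n+k+1) : ℝ)/(Nat.factorial (n+2*k+3) : ℝ) * H (n+k+1) := congrFun hfun n
      show 0 ≤ Fk k (n+k+1) - Fk k (n+1+k+1)
      rw [h]
      have := H_nonneg (n+k+1); positivity)
    ((Fk_tendsto k).comp (tendsto_add_atTop_nat (k+1)))
  simp only [show (0:ℕ)+k+1 = k+1 from by omega] at hts
  rw [hfun] at hts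
  have hmain := hts.mul_left ((Nat.factorial (2*k+1) : ℝ) / (Nat.factorial (k+1) : ℝ))
  have hfun2 : (fun n : ℕ => (Nat.factorial (2*k+1) : ℝ) / (Nat.factorial (k+1) : ℝ) *
      ((Nat.factorial (n+k+1) : ℝ)/(Nat.factorial (n+2*k+3) : ℝ) * H (n+k+1))) =
      (fun n : ℕ =>
      (1 / (Nat.factorial (k+1) : ℝ)) *
      ((Nat.factorial (2*k+1) : ℝ) * (Nat.factorial (n+k+1) : ℝ) / (Nat.factorial (n+2*k+3) : ℝ))
      * H (n+k+1)) := by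
    funext n; ring
  rw [hfun2] at hmain
  have hval : (Nat.factorial (2*k+1) : ℝ) / (Nat.factorial (k+1) : ℝ) * Fk k (k+1) =
      H k / (2*((k:ℝ)+1)^2) + 1/((k:ℝ)+1)^3 := by
    unfold Fk
    rw [show k+1+k+1 = (2*k+1)+1 from by omega, Nat.factorial_succ (2*k+1),
      Nat.factorial_succ k, H_succ]
    have h1 : (Nat.factorial (2*k+1) : ℝ) ≠ 0 := by positivity
    have h2 : (Nat.factorial k : ℝ) ≠ 0 := by positivity
    have h3 : ((k:ℝ)+1) ≠ 0 := by positivity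
    push_cast
    field_simp
    ring
  rwa [hval] at hmain

lemma H_tail_le (N M : ℕ) : H (N+M) - H N ≤ (M:ℝ)/((N:ℝ)+1) := by
  induction M with
  | zero => simp
  | succ M ih =>
    rw [show N+(M+1) = (N+M)+1 from by omega, H_succ]
    have hle : 1/((N:ℝ)+(M:ℝ)+1) ≤ 1/((N:ℝ)+1) := by
      apply div_le_div_of_nonneg_left (by norm_num) (by positivity)
      have : (0:ℝ) ≤ (M:ℝ) := Nat.cast_nonneg M
      linarith
    push_cast
    push_cast at ih
    have : ((N:ℝ)+(M:ℝ)) + 1 = (N:ℝ)+(M:ℝ)+1 := by ring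
    rw [this]
    have hd : ((M:ℝ)+1)/((N:ℝ)+1) = (M:ℝ)/((N:ℝ)+1) + 1/((N:ℝ)+1) := by ring
    rw [hd]
    linarith

lemma sum_range_frac (M : ℕ) (N : ℕ) :
    ∑ j ∈ Finset.range N, (1/((j:ℝ)+1) - 1/((j:ℝ)+1+(M:ℝ))) = H N + H M - H (N+M) := by
  induction N with
  | zero => simp [H_zero]
  | succ N ih =>
    rw [Finset.sum_range_succ, ih, H_succ, show N+1+M = (N+M)+1 from by omega, H_succ]
    push_cast
    ring

lemma hasSum_one_div_JJM (m : ℕ) :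
    HasSum (fun j : ℕ => 1/(((j:ℝ)+1)*((j:ℝ)+(m:ℝ)+2)))
      (H (m+1) / ((m:ℝ)+1)) := by
  rw [hasSum_iff_tendsto_nat_of_nonneg (fun j => by positivity)]
  have hps : ∀ N : ℕ, ∑ j ∈ Finset.range N, 1/(((j:ℝ)+1)*((j:ℝ)+(m:ℝ)+2)) =
      (1/((m:ℝ)+1)) * (H N + H (m+1) - H (N+(m+1))) := by
    intro N
    rw [← sum_range_frac (m+1) N, Finset.mul_sum]
    apply Finset.sum_congr rfl
    intro j _
    have h1 : ((j:ℝ)+1) ≠ 0 := by positivity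
    have h4 : ((j:ℝ)+1+((m:ℝ)+1)) ≠ 0 := by positivity
    push_cast
    rw [div_sub_div _ _ h1 h4, div_mul_div_comm, one_mul,
      div_eq_div_iff (by positivity) (by positivity)]
    ring
  simp only [hps]
  have hdiff : Tendsto (fun N : ℕ => H (N+(m+1)) - H N) atTop (𝓝 0) := by
    apply squeeze_zero (fun N => ?_) (fun N => H_tail_le N (m+1))
    · have h2 : Tendsto (fun N : ℕ => ((m:ℝ)+1) * (1/((N:ℝ)+1))) atTop (𝓝 (((m:ℝ)+1) * 0)) :=
        tendsto_one_div_add_atTop_nhds_zero_nat.const_mul _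
      simp only [mul_zero] at h2
      refine h2.congr fun N => ?_
      push_cast
      ring
    · have := H_mono (Nat.le_add_right N (m+1))
      linarith
  have : Tendsto (fun N : ℕ => (1/((m:ℝ)+1)) * (H N + H (m+1) - H (N+(m+1)))) atTop
      (𝓝 ((1/((m:ℝ)+1)) * (H (m+1) - 0))) := by
    apply Tendsto.const_mul
    have := tendsto_const_nhds (x := H (m+1)) (f := atTop (α := ℕ))
    have h2 : (fun N : ℕ => H N + H (m+1) - H (N+(m+1))) =
        (fun N : ℕ => H (m+1) - (H (N+(m+1)) - H N)) := by funext N; ring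
    rw [h2]
    exact tendsto_const_nhds.sub hdiff
  simpa [mul_comm, div_eq_mul_inv] using this

lemma hasSum_T_inner (m : ℕ) :
    HasSum (fun j : ℕ => 1/(((j:ℝ)+1)*((m:ℝ)+1)*((j:ℝ)+(m:ℝ)+2)))
      (H (m+1) / ((m:ℝ)+1)^2) := by
  have h := (hasSum_one_div_JJM m).mul_left (1/((m:ℝ)+1))
  have h1 : (fun j : ℕ => 1/((m:ℝ)+1) * (1/(((j:ℝ)+1)*((j:ℝ)+(m:ℝ)+2)))) =
      (fun j : ℕ => 1/(((j:ℝ)+1)*((m:ℝ)+1)*((j:ℝ)+(m:ℝ)+2))) := by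
    funext j
    rw [div_mul_div_comm]
    ring_nf
  have h2 : 1/((m:ℝ)+1) * (H (m+1) / ((m:ℝ)+1)) = H (m+1) / ((m:ℝ)+1)^2 := by
    rw [div_mul_div_comm]
    ring_nf
  rwa [h1, h2] at h

noncomputable def Qf (k j : ℕ) : ℝ := if j < k then 1/(((j:ℝ)+1)*((k:ℝ)+1)^2) else 0

noncomputable def Pf (j m : ℕ) : ℝ := 1/(((j:ℝ)+1)*((j:ℝ)+(m:ℝ)+2)^2)

lemma Qf_nonneg (k j : ℕ) : 0 ≤ Qf k j := by
  unfold Qf; split <;> positivity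

lemma Qf_hasSum (k : ℕ) : HasSum (Qf k) (H k/((k:ℝ)+1)^2) := by
  have h := hasSum_sum_of_ne_finset_zero (s := Finset.range k) (f := Qf k) (L := SummationFilter.unconditional ℕ)
    (fun j hj => by
      unfold Qf
      rw [if_neg (by simpa using hj)])
  have : ∑ j ∈ Finset.range k, Qf k j = H k/((k:ℝ)+1)^2 := by
    unfold H
    rw [Finset.sum_div]
    apply Finset.sum_congr rfl
    intro j hj
    unfold Qf
    rw [if_pos (Finset.mem_range.mp hj)]
    rw [div_div]
  rwa [this] at h

lemma summable_Hdiv : Summable (fun k : ℕ => H k/((k:ℝ)+1)^2) := by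
  apply Summable.of_nonneg_of_le (fun k => by have := H_nonneg k; positivity)
    (f := fun k : ℕ => 2 * (Real.sqrt ((k:ℝ)+1)/((k:ℝ)+1)^2))
  · intro k
    have h1 : H k ≤ 2*Real.sqrt ((k:ℝ)+1) := by
      refine (H_le_two_sqrt k).trans ?_
      have := Real.sqrt_le_sqrt (show (k:ℝ) ≤ (k:ℝ)+1 by linarith)
      linarith
    rw [div_le_iff₀ (by positivity)]
    calc H k ≤ 2*Real.sqrt ((k:ℝ)+1) := h1
      _ = 2 * (Real.sqrt ((k:ℝ)+1)/((k:ℝ)+1)^2) * ((k:ℝ)+1)^2 := by field_simp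
  · exact summable_sqrt_div.mul_left 2

lemma summable_Qf_col (j : ℕ) : Summable (fun k => Qf k j) := by
  apply Summable.of_nonneg_of_le (fun k => Qf_nonneg k j)
    (f := fun k : ℕ => 1/((k:ℝ)+1)^2)
  · intro k
    unfold Qf
    split
    · rw [div_le_div_iff₀ (by positivity) (by positivity)]
      have : (1:ℝ) ≤ (j:ℝ)+1 := by
        linarith [show (0:ℝ) ≤ (j:ℝ) from Nat.cast_nonneg j]
      nlinarith [sq_nonneg ((k:ℝ)+1), show (0:ℝ) ≤ (k:ℝ) from Nat.cast_nonneg k]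
    · positivity
  · exact summable_one_div_sq

lemma summable_uncurry_Qf : Summable (fun p : ℕ × ℕ => Qf p.1 p.2) := by
  apply (summable_prod_of_nonneg (fun p => Qf_nonneg p.1 p.2)).mpr
  constructor
  · exact fun k => (Qf_hasSum k).summable
  · apply Summable.congr summable_Hdiv
    intro k
    exact ((Qf_hasSum k).tsum_eq).symm

lemma Qf_shift (j m : ℕ) : Qf (m+j+1) j = Pf j m := by
  unfold Qf Pf
  rw [if_pos (by omega)]
  have : ((m+j+1:ℕ):ℝ)+1 = (j:ℝ)+(m:ℝ)+2 := by push_cast; ring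
  rw [this]

lemma Qf_col_tsum (j : ℕ) : ∑' k, Qf k j = ∑' m, Pf j m := by
  rw [← (summable_Qf_col j).sum_add_tsum_nat_add (j+1)]
  have h0 : ∑ i ∈ Finset.range (j+1), Qf i j = 0 := by
    apply Finset.sum_eq_zero
    intro i hi
    unfold Qf
    rw [if_neg (by simp at hi; omega)]
  rw [h0, zero_add]
  apply tsum_congr
  intro m
  rw [show m+(j+1) = m+j+1 from by omega, Qf_shift]

lemma summable_uncurry_Pf : Summable (fun p : ℕ × ℕ => Pf p.1 p.2) := by
  have hinj : Function.Injective (fun p : ℕ × ℕ => ((p.2 + p.1 + 1, p.1) : ℕ × ℕ)) := by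
    intro ⟨a,b⟩ ⟨c,d⟩ h
    simp only [Prod.mk.injEq] at h
    obtain ⟨h1, h2⟩ := h
    simp only [Prod.mk.injEq]
    omega
  have := summable_uncurry_Qf.comp_injective hinj
  apply this.congr
  intro ⟨j, m⟩
  simp only [Function.comp_apply]
  exact Qf_shift j m

lemma summable_uncurry_Pf' : Summable (fun p : ℕ × ℕ => Pf p.2 p.1) := by
  have := (Equiv.prodComm ℕ ℕ).summable_iff.mpr summable_uncurry_Pf
  apply this.congr
  intro p
  rfl

lemma euler_sum : ∑' k : ℕ, H k/((k:ℝ)+1)^2 = ∑' n : ℕ, (1:ℝ)/((n:ℝ)+1)^3 := by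
  set S := ∑' k : ℕ, H k/((k:ℝ)+1)^2 with hS
  set W := ∑' (j : ℕ), ∑' (m : ℕ), Pf j m with hW
  -- W = S
  have hWS : W = S := by
    have h1 : ∀ j, ∑' m, Pf j m = ∑' k, Qf k j := fun j => (Qf_col_tsum j).symm
    have h2 : ∑' (j : ℕ), ∑' (k : ℕ), Qf k j = ∑' (k : ℕ), ∑' (j : ℕ), Qf k j :=
      Summable.tsum_comm' summable_uncurry_Qf (fun k => (Qf_hasSum k).summable) summable_Qf_col
    have h3 : ∀ k, ∑' j, Qf k j = H k/((k:ℝ)+1)^2 := fun k => (Qf_hasSum k).tsum_eq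
    rw [hW]
    calc ∑' (j : ℕ), ∑' (m : ℕ), Pf j m = ∑' (j : ℕ), ∑' (k : ℕ), Qf k j := by
          exact tsum_congr h1
      _ = ∑' (k : ℕ), ∑' (j : ℕ), Qf k j := h2
      _ = S := by rw [hS]; exact tsum_congr h3
  -- T = S + zeta-like
  have hTval : ∑' (m : ℕ), ∑' (j : ℕ),
      1/(((j:ℝ)+1)*((m:ℝ)+1)*((j:ℝ)+(m:ℝ)+2)) = S + ∑' n : ℕ, (1:ℝ)/((n:ℝ)+1)^3 := by
    have h1 : ∀ m : ℕ, ∑' (j : ℕ), 1/(((j:ℝ)+1)*((m:ℝ)+1)*((j:ℝ)+(m:ℝ)+2)) =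
        H (m+1)/((m:ℝ)+1)^2 := fun m => (hasSum_T_inner m).tsum_eq
    rw [tsum_congr h1]
    have h2 : ∀ m : ℕ, H (m+1)/((m:ℝ)+1)^2 = H m/((m:ℝ)+1)^2 + 1/((m:ℝ)+1)^3 := by
      intro m
      rw [H_succ]
      have h3 : ((m:ℝ)+1) ≠ 0 := by positivity
      field_simp
    rw [tsum_congr h2, Summable.tsum_add summable_Hdiv summable_one_div_cube]
  -- T = 2W
  have hT2W : ∑' (m : ℕ), ∑' (j : ℕ),
      1/(((j:ℝ)+1)*((m:ℝ)+1)*((j:ℝ)+(m:ℝ)+2)) = W + W := by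
    have hpt : ∀ m j : ℕ, 1/(((j:ℝ)+1)*((m:ℝ)+1)*((j:ℝ)+(m:ℝ)+2)) = Pf j m + Pf m j := by
      intro m j
      unfold Pf
      have h1 : ((j:ℝ)+1) ≠ 0 := by positivity
      have h2 : ((m:ℝ)+1) ≠ 0 := by positivity
      have h3 : ((j:ℝ)+(m:ℝ)+2) ≠ 0 := by positivity
      have h4 : ((m:ℝ)+(j:ℝ)+2) ≠ 0 := by positivity
      field_simp
      ring
    have hsum1 : ∀ m, Summable (fun j => Pf j m) := fun m =>
      (summable_uncurry_Pf'.prod_factor m)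
    have hsum2 : ∀ m, Summable (fun j => Pf m j) := fun m =>
      (summable_uncurry_Pf.prod_factor m)
    have hinner : ∀ m : ℕ, ∑' (j : ℕ), 1/(((j:ℝ)+1)*((m:ℝ)+1)*((j:ℝ)+(m:ℝ)+2)) =
        (∑' j, Pf j m) + ∑' j, Pf m j := by
      intro m
      rw [tsum_congr (hpt m), Summable.tsum_add (hsum1 m) (hsum2 m)]
    rw [tsum_congr hinner]
    have hs1 : Summable (fun m => ∑' j, Pf j m) := by
      have := ((summable_prod_of_nonneg
        (fun p : ℕ × ℕ => by exact (by unfold Pf; positivity : (0:ℝ) ≤ Pf p.2 p.1))).mp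
        summable_uncurry_Pf').2
      exact this
    have hs2 : Summable (fun m => ∑' j, Pf m j) := by
      have := ((summable_prod_of_nonneg
        (fun p : ℕ × ℕ => by exact (by unfold Pf; positivity : (0:ℝ) ≤ Pf p.1 p.2))).mp
        summable_uncurry_Pf).2
      exact this
    rw [Summable.tsum_add hs1 hs2]
    congr 1
    · rw [hW]
      exact Summable.tsum_comm' summable_uncurry_Pf (fun j => summable_uncurry_Pf.prod_factor j)
        (fun m => summable_uncurry_Pf'.prod_factor m)
  have : W + W = S + ∑' n : ℕ, (1:ℝ)/((n:ℝ)+1)^3 := by rw [← hT2W, hTval]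
  rw [hWS] at this
  linarith

noncomputable def zeta3 : ℝ := ∑' n : ℕ, (1:ℝ)/((n:ℝ)+1)^3

lemma summable_ck : Summable (fun k : ℕ => H k / (2*((k:ℝ)+1)^2) + 1/((k:ℝ)+1)^3) := by
  apply Summable.add
  · apply (summable_Hdiv.mul_left (1/2)).congr
    intro k
    rw [div_mul_div_comm, one_mul]
  · exact summable_one_div_cube

lemma tsum_ck : ∑' k : ℕ, (H k / (2*((k:ℝ)+1)^2) + 1/((k:ℝ)+1)^3) = (3/2) * zeta3 := by
  rw [Summable.tsum_add ((summable_Hdiv.mul_left (1/2)).congr (fun k => by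
      rw [div_mul_div_comm, one_mul])) summable_one_div_cube]
  have h1 : ∑' k : ℕ, H k / (2*((k:ℝ)+1)^2) = (1/2) * ∑' k : ℕ, H k / ((k:ℝ)+1)^2 := by
    rw [← tsum_mul_left]
    apply tsum_congr
    intro k
    rw [div_mul_div_comm, one_mul]
  rw [h1, euler_sum]
  unfold zeta3
  ring

theorem stmt17 : ∑' n : ℕ, ∑' k : ℕ,
    (1 / (Nat.factorial (k+1) : ℝ)) *
    ((Nat.factorial (2*k+1) : ℝ) * (Nat.factorial (n+k+1) : ℝ) / (Nat.factorial (n+2*k+3) : ℝ))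
    * H (n+k+1) = (3/2) * zeta3 := by
  set g : ℕ → ℕ → ℝ := fun k n =>
    (1 / (Nat.factorial (k+1) : ℝ)) *
    ((Nat.factorial (2*k+1) : ℝ) * (Nat.factorial (n+k+1) : ℝ) / (Nat.factorial (n+2*k+3) : ℝ))
    * H (n+k+1) with hg
  have hnonneg : ∀ k n, 0 ≤ g k n := by
    intro k n
    rw [hg]
    have := H_nonneg (n+k+1)
    positivity
  have h1 : ∀ k, Summable (g k) := fun k => (inner_hasSum k).summable
  have htsum : ∀ k, ∑' n, g k n = H k / (2*((k:ℝ)+1)^2) + 1/((k:ℝ)+1)^3 :=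
    fun k => (inner_hasSum k).tsum_eq
  have h2 : Summable (fun k => ∑' n, g k n) := by
    apply summable_ck.congr
    intro k
    rw [htsum k]
  have huncurry : Summable (fun p : ℕ × ℕ => g p.1 p.2) :=
    (summable_prod_of_nonneg (fun p => hnonneg p.1 p.2)).mpr ⟨h1, h2⟩
  have h3 : ∀ n, Summable (fun k => g k n) := by
    intro n
    have hsw : Summable (fun p : ℕ × ℕ => g p.2 p.1) := by
      have := (Equiv.prodComm ℕ ℕ).summable_iff.mpr huncurry
      exact this.congr (fun p => rfl)
    exact hsw.prod_factor n
  have hswap : ∑' n, ∑' k, g k n = ∑' k, ∑' n, g k n :=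
    Summable.tsum_comm' huncurry h1 h3
  calc ∑' n : ℕ, ∑' k : ℕ,
      (1 / (Nat.factorial (k+1) : ℝ)) *
      ((Nat.factorial (2*k+1) : ℝ) * (Nat.factorial (n+k+1) : ℝ) / (Nat.factorial (n+2*k+3) : ℝ))
      * H (n+k+1) = ∑' n, ∑' k, g k n := rfl
    _ = ∑' k, ∑' n, g k n := hswap
    _ = ∑' k : ℕ, (H k / (2*((k:ℝ)+1)^2) + 1/((k:ℝ)+1)^3) := tsum_congr htsum
    _ = (3/2) * zeta3 := tsum_ck
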